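/- For any two countable measurable partitions B and C of a probability space with finite w-th information moments, K_w(B ∨ C)^{1/w} ≤ K_w(C|B)^{1/w} + K_w(B)^{1/w}, where B ∨ C is the common refinement. -/

import Mathlib

open MeasureTheory

def IsCountablePartition {Ω : Type*} [MeasurableSpace Ω] (μ : Measure Ω)
    (B : ℕ → Set Ω) : Prop :=
  (∀ i, MeasurableSet (B i)) ∧ Pairwise (Function.onFun Disjoint B) ∧ μ (⋃ i, B i) = μ Set.univ

/-- `K_w(B) = Σ_B μ(B) |log μ(B)|^w`. -/
noncomputable def Kw {Ω : Type*} [MeasurableSpace Ω] (μ : Measure Ω) (w : ℝ)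
    (B : ℕ → Set Ω) : ℝ :=
  ∑' i, (μ (B i)).toReal * |Real.log (μ (B i)).toReal| ^ w

/-- `K_w(C|B) = Σ_{B,C} μ(B∩C) |log(μ(B∩C)/μ(B))|^w`. -/
noncomputable def KwCond {Ω : Type*} [MeasurableSpace Ω] (μ : Measure Ω) (w : ℝ)
    (B C : ℕ → Set Ω) : ℝ :=
  ∑' p : ℕ × ℕ, (μ (B p.1 ∩ C p.2)).toReal *
    |Real.log ((μ (B p.1 ∩ C p.2)).toReal / (μ (B p.1)).toReal)| ^ w

/-- `K_w(B ∨ C)` for the common refinement `B ∨ C = {B ∩ C}`. -/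
noncomputable def KwJoin {Ω : Type*} [MeasurableSpace Ω] (μ : Measure Ω) (w : ℝ)
    (B C : ℕ → Set Ω) : ℝ :=
  ∑' p : ℕ × ℕ, (μ (B p.1 ∩ C p.2)).toReal *
    |Real.log ((μ (B p.1 ∩ C p.2)).toReal)| ^ w

open ENNReal

lemma tsum_Lp_add_le' {ι : Type*} [Countable ι] [MeasurableSpace ι]
    [MeasurableSingletonClass ι] {p : ℝ} (hp : 1 ≤ p) (f g : ι → ℝ≥0∞) :
    (∑' i, (f i + g i) ^ p) ^ (1 / p) ≤
      (∑' i, f i ^ p) ^ (1 / p) + (∑' i, g i ^ p) ^ (1 / p) := by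
  simp only [← MeasureTheory.lintegral_count]
  exact ENNReal.lintegral_Lp_add_le (measurable_of_countable f).aemeasurable
    (measurable_of_countable g).aemeasurable hp

theorem join_moment_le_cond {Ω : Type*} [MeasurableSpace Ω]
    (μ : Measure Ω) [IsProbabilityMeasure μ] (w : ℝ) (hw : 1 ≤ w)
    (B C : ℕ → Set Ω)
    (hB : IsCountablePartition μ B) (hC : IsCountablePartition μ C)
    (hBsmall : ∀ i, μ (B i) ≤ ENNReal.ofReal (Real.exp (-w)))
    (hCsmall : ∀ i, μ (C i) ≤ ENNReal.ofReal (Real.exp (-w)))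
    (hKB : Summable fun i => (μ (B i)).toReal * |Real.log (μ (B i)).toReal| ^ w)
    (hKC : Summable fun i => (μ (C i)).toReal * |Real.log (μ (C i)).toReal| ^ w) :
    KwJoin μ w B C ^ (1 / w) ≤ KwCond μ w B C ^ (1 / w) + Kw μ w B ^ (1 / w) := by
  have hw0 : (0:ℝ) < w := lt_of_lt_of_le one_pos hw
  have hw0' : (0:ℝ) ≤ w := hw0.le
  have hwinv : (0:ℝ) < 1 / w := by positivity
  set P : ℕ × ℕ → ℝ := fun p => (μ (B p.1 ∩ C p.2)).toReal with hPdef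
  set Q : ℕ → ℝ := fun i => (μ (B i)).toReal with hQdef
  set jn : ℕ × ℕ → ℝ := fun p => P p * |Real.log (P p)| ^ w with hjndef
  set cd : ℕ × ℕ → ℝ := fun p => P p * |Real.log (P p / Q p.1)| ^ w with hcddef
  set kb : ℕ → ℝ := fun i => Q i * |Real.log (Q i)| ^ w with hkbdef
  have hPnn : ∀ p, 0 ≤ P p := fun p => ENNReal.toReal_nonneg
  have hQnn : ∀ i, 0 ≤ Q i := fun i => ENNReal.toReal_nonneg
  have hjnnn : ∀ p, 0 ≤ jn p := fun p =>
    mul_nonneg (hPnn p) (Real.rpow_nonneg (abs_nonneg _) w)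
  have hcdnn : ∀ p, 0 ≤ cd p := fun p =>
    mul_nonneg (hPnn p) (Real.rpow_nonneg (abs_nonneg _) w)
  have hkbnn : ∀ i, 0 ≤ kb i := fun i =>
    mul_nonneg (hQnn i) (Real.rpow_nonneg (abs_nonneg _) w)
  have hPQ : ∀ p : ℕ × ℕ, P p ≤ Q p.1 := fun p =>
    ENNReal.toReal_mono (measure_ne_top μ _) (measure_mono Set.inter_subset_left)
  have hQ1 : ∀ i, Q i ≤ 1 := fun i => by
    rw [hQdef]
    exact ENNReal.toReal_le_of_le_ofReal one_pos.le (by simpa using prob_le_one)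
  -- |log (P/Q)| ≤ |log P|
  have hfg : ∀ p : ℕ × ℕ, |Real.log (P p / Q p.1)| ≤ |Real.log (P p)| := by
    intro p
    rcases eq_or_lt_of_le (hPnn p) with h0 | h0
    · rw [← h0]; simp
    · have hQ0 : 0 < Q p.1 := lt_of_lt_of_le h0 (hPQ p)
      rw [Real.log_div (ne_of_gt h0) (ne_of_gt hQ0)]
      have hlogP : Real.log (P p) ≤ 0 :=
        Real.log_nonpos (hPnn p) ((hPQ p).trans (hQ1 p.1))
      have hlogQ : Real.log (Q p.1) ≤ 0 := Real.log_nonpos (hQnn p.1) (hQ1 p.1)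
      have hle : Real.log (P p) ≤ Real.log (Q p.1) := Real.log_le_log h0 (hPQ p)
      rw [abs_of_nonpos (by linarith), abs_of_nonpos hlogP]
      linarith
  -- triangle: |log P| ≤ |log (P/Q)| + |log Q|
  have htri : ∀ p : ℕ × ℕ, |Real.log (P p)| ≤ |Real.log (P p / Q p.1)| + |Real.log (Q p.1)| := by
    intro p
    rcases eq_or_lt_of_le (hPnn p) with h0 | h0
    · rw [← h0]; simp
    · have hQ0 : 0 < Q p.1 := lt_of_lt_of_le h0 (hPQ p)
      rw [Real.log_div (ne_of_gt h0) (ne_of_gt hQ0)]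
      calc |Real.log (P p)| = |(Real.log (P p) - Real.log (Q p.1)) + Real.log (Q p.1)| := by
            ring_nf
        _ ≤ _ := abs_add_le _ _
  by_cases hjs : Summable jn
  · -- main case
    have hcds : Summable cd := by
      refine Summable.of_nonneg_of_le hcdnn (fun p => ?_) hjs
      exact mul_le_mul_of_nonneg_left
        (Real.rpow_le_rpow (abs_nonneg _) (hfg p) hw0') (hPnn p)
    -- ENNReal versions
    set e : ℕ × ℕ → ℝ≥0∞ := fun p => μ (B p.1 ∩ C p.2) with hedef
    have hePR : ∀ p, ENNReal.ofReal (P p) = e p := fun p =>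
      ENNReal.ofReal_toReal (measure_ne_top μ _)
    set F : ℕ × ℕ → ℝ≥0∞ := fun p => ENNReal.ofReal |Real.log (P p / Q p.1)| with hFdef
    set G : ℕ × ℕ → ℝ≥0∞ := fun p => ENNReal.ofReal |Real.log (Q p.1)| with hGdef
    set u : ℕ × ℕ → ℝ≥0∞ := fun p => e p ^ (1/w) * F p with hudef
    set v : ℕ × ℕ → ℝ≥0∞ := fun p => e p ^ (1/w) * G p with hvdef
    have hepow : ∀ p, (e p ^ (1/w)) ^ w = e p := by
      intro p
      rw [← ENNReal.rpow_mul, one_div, inv_mul_cancel₀ (ne_of_gt hw0), ENNReal.rpow_one]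
    have huv : ∀ p, (u p + v p) ^ w = e p * (F p + G p) ^ w := by
      intro p
      rw [hudef, hvdef, ← mul_add, ENNReal.mul_rpow_of_nonneg _ _ hw0', hepow]
    have hA : ∀ p, ENNReal.ofReal (jn p) ≤ (u p + v p) ^ w := by
      intro p
      rw [huv p, hjndef]
      calc ENNReal.ofReal (P p * |Real.log (P p)| ^ w)
          = e p * ENNReal.ofReal (|Real.log (P p)|) ^ w := by
            rw [ENNReal.ofReal_mul (hPnn p), hePR p,
              ENNReal.ofReal_rpow_of_nonneg (abs_nonneg _) hw0']
        _ ≤ e p * (F p + G p) ^ w := by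
            gcongr
            rw [hFdef, hGdef, ← ENNReal.ofReal_add (abs_nonneg _) (abs_nonneg _)]
            exact ENNReal.ofReal_le_ofReal (htri p)
    have hu : ∀ p, u p ^ w = ENNReal.ofReal (cd p) := by
      intro p
      rw [hudef, ENNReal.mul_rpow_of_nonneg _ _ hw0', hepow, hcddef,
        ENNReal.ofReal_mul (hPnn p), hePR p, hFdef,
        ENNReal.ofReal_rpow_of_nonneg (abs_nonneg _) hw0']
    -- sum over j of e (i,j) = μ (B i)
    have hBi : ∀ i, (∑' j, μ (B i ∩ C j)) = μ (B i) := by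
      intro i
      have hnull : μ (⋃ j, C j)ᶜ = 0 := by
        rw [measure_compl (MeasurableSet.iUnion hC.1) (measure_ne_top μ _), hC.2.2]
        simp
      rw [← measure_iUnion (fun j k hjk => (hC.2.1 hjk).mono
          Set.inter_subset_right Set.inter_subset_right)
          (fun j => (hB.1 i).inter (hC.1 j)),
        ← Set.inter_iUnion]
      exact measure_inter_conull hnull
    have hv : (∑' p : ℕ × ℕ, v p ^ w) = ∑' i, ENNReal.ofReal (kb i) := by
      have hvw : ∀ p : ℕ × ℕ, v p ^ w = e p * G p ^ w := fun p => by
        rw [hvdef, ENNReal.mul_rpow_of_nonneg _ _ hw0', hepow]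
      calc (∑' p : ℕ × ℕ, v p ^ w) = ∑' (i) (j), e (i, j) * G (i, j) ^ w := by
            rw [tsum_congr hvw, ENNReal.tsum_prod']
        _ = ∑' i, (∑' j, μ (B i ∩ C j)) * ENNReal.ofReal |Real.log (Q i)| ^ w := by
            refine tsum_congr fun i => ?_
            rw [← ENNReal.tsum_mul_right]
        _ = ∑' i, ENNReal.ofReal (kb i) := by
            refine tsum_congr fun i => ?_
            rw [hBi i, hkbdef, ENNReal.ofReal_mul (hQnn i),
              ENNReal.ofReal_toReal (measure_ne_top μ _),
              ENNReal.ofReal_rpow_of_nonneg (abs_nonneg _) hw0']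
    -- ENNReal inequality
    have emain : (∑' p, ENNReal.ofReal (jn p)) ^ (1/w) ≤
        (∑' p, ENNReal.ofReal (cd p)) ^ (1/w) +
        (∑' i, ENNReal.ofReal (kb i)) ^ (1/w) := by
      calc (∑' p, ENNReal.ofReal (jn p)) ^ (1/w)
          ≤ (∑' p, (u p + v p) ^ w) ^ (1/w) :=
            ENNReal.rpow_le_rpow (ENNReal.tsum_le_tsum hA) hwinv.le
        _ ≤ (∑' p, u p ^ w) ^ (1/w) + (∑' p, v p ^ w) ^ (1/w) :=
            tsum_Lp_add_le' hw u v
        _ = _ := by rw [tsum_congr hu, hv]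
    -- convert to reals
    have hsumJ : ENNReal.ofReal (KwJoin μ w B C) = ∑' p, ENNReal.ofReal (jn p) :=
      ENNReal.ofReal_tsum_of_nonneg hjnnn hjs
    have hsumC : ENNReal.ofReal (KwCond μ w B C) = ∑' p, ENNReal.ofReal (cd p) :=
      ENNReal.ofReal_tsum_of_nonneg hcdnn hcds
    have hsumK : ENNReal.ofReal (Kw μ w B) = ∑' i, ENNReal.ofReal (kb i) :=
      ENNReal.ofReal_tsum_of_nonneg hkbnn hKB
    rw [← hsumJ, ← hsumC, ← hsumK] at emain
    have hJnn : 0 ≤ KwJoin μ w B C := tsum_nonneg hjnnn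
    have hCnn : 0 ≤ KwCond μ w B C := tsum_nonneg hcdnn
    have hKnn : 0 ≤ Kw μ w B := tsum_nonneg hkbnn
    have hCfin : ENNReal.ofReal (KwCond μ w B C) ^ (1/w) ≠ ⊤ :=
      ENNReal.rpow_ne_top_of_nonneg hwinv.le ENNReal.ofReal_ne_top
    have hKfin : ENNReal.ofReal (Kw μ w B) ^ (1/w) ≠ ⊤ :=
      ENNReal.rpow_ne_top_of_nonneg hwinv.le ENNReal.ofReal_ne_top
    have := ENNReal.toReal_mono (ENNReal.add_ne_top.mpr ⟨hCfin, hKfin⟩) emain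
    rwa [ENNReal.toReal_add hCfin hKfin, ← ENNReal.toReal_rpow, ← ENNReal.toReal_rpow,
      ← ENNReal.toReal_rpow, ENNReal.toReal_ofReal hJnn,
      ENNReal.toReal_ofReal hCnn, ENNReal.toReal_ofReal hKnn] at this
  · -- non-summable: LHS is 0
    have : KwJoin μ w B C = 0 := tsum_eq_zero_of_not_summable hjs
    rw [this, Real.zero_rpow (ne_of_gt hwinv)]
    have h1 : 0 ≤ KwCond μ w B C := tsum_nonneg hcdnn
    have h2 : 0 ≤ Kw μ w B := tsum_nonneg hkbnn
    positivity
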